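/- arXiv:1702.03527 — 2 statements merged into one kernel-verified Lean document; each statement's English description precedes it below -/
import Mathlib

section
/- In the exponential graph $K_n^{K_n}$ (for $n \geq 2$), every bijective vertex $f: [n] \to [n]$ satisfies $N(f) = \{f\}$; consequently the neighborhood complex $\mathcal{N}(K_n^{K_n})$ is disconnected. -/
/-- Adjacency in the exponential graph `K_n^{K_n}`. -/
def ExpAdj (n m : ℕ) (f g : Fin n → Fin m) : Prop :=
  ∀ i j : Fin n, i ≠ j → f i ≠ g j

/-- Geometric realization of an abstract simplicial complex with vertex set `V`,
given by its set `K` of faces: points are convex weights supported on a face. -/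
def Realization {V : Type*} (K : Finset V → Prop) : Type _ :=
  {w : V → ℝ // (∀ v, 0 ≤ w v) ∧ (∑ᶠ v, w v) = 1 ∧
    ∃ σ : Finset V, K σ ∧ ∀ v, w v ≠ 0 → v ∈ σ}

instance {V : Type*} (K : Finset V → Prop) : TopologicalSpace (Realization K) :=
  instTopologicalSpaceSubtype

/-- Faces of the neighborhood complex `𝒩(K_n^{K_n})`: sets of vertices with a
common neighbor. -/
def NFace (n : ℕ) (σ : Finset (Fin n → Fin n)) : Prop :=
  ∃ h : Fin n → Fin n, ∀ f ∈ σ, ExpAdj n n f h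

/-- In `K_n^{K_n}` (`n ≥ 2`), every bijective vertex `f` satisfies `N(f) = {f}`;
consequently the neighborhood complex `𝒩(K_n^{K_n})` is disconnected. -/
theorem bijective_selfneighbor_and_disconnected (n : ℕ) (hn : 2 ≤ n) :
    (∀ f : Fin n → Fin n, Function.Bijective f →
      ∀ g : Fin n → Fin n, ExpAdj n n f g ↔ g = f) ∧
    ¬ ConnectedSpace (Realization (NFace n)) := by
  have key : ∀ f : Fin n → Fin n, Function.Bijective f →
      ∀ g : Fin n → Fin n, ExpAdj n n f g ↔ g = f := by
    intro f hf g
    constructor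
    · intro hadj
      funext j
      obtain ⟨i, hi⟩ := hf.2 (g j)
      by_cases hij : i = j
      · rw [← hi, hij]
      · exact absurd hi (hadj i j hij)
    · rintro rfl i j hij h
      exact hij (hf.1 h)
  refine ⟨key, ?_⟩
  intro hconn
  -- the evaluation at `id` is continuous
  have hcont : Continuous (fun w : Realization (NFace n) => w.1 id) :=
    (continuous_apply (id : Fin n → Fin n)).comp continuous_subtype_val
  -- support lemma: if `w id ≠ 0` then `w id = 1`
  have supp : ∀ w : Realization (NFace n), w.1 id ≠ 0 → w.1 id = 1 := by
    intro w hne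
    obtain ⟨hpos, hsum, σ, ⟨h, hh⟩, hsupp⟩ := w.2
    have hidσ : (id : Fin n → Fin n) ∈ σ := hsupp id hne
    have hhid : h = id := (key id Function.bijective_id h).1 (hh id hidσ)
    subst hhid
    have hσid : ∀ g ∈ σ, g = id := by
      intro g hg
      have : ExpAdj n n id g := by
        intro i j hij
        exact (hh g hg j i (Ne.symm hij)).symm
      exact (key id Function.bijective_id g).1 this
    have : (∑ᶠ v, w.1 v) = w.1 id := by
      apply finsum_eq_single
      intro v hv
      by_contra hv0
      exact hv (hσid v (hsupp v hv0))
    rw [← this, hsum]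
  -- the clopen set
  set U : Set (Realization (NFace n)) := {w | w.1 id ≠ 0} with hU
  have hUopen : IsOpen U := isOpen_compl_singleton.preimage hcont
  have hUeq : U = (fun w : Realization (NFace n) => w.1 id) ⁻¹' {1} := by
    ext w
    constructor
    · intro hw; exact supp w hw
    · intro hw; simp only [Set.mem_preimage, Set.mem_singleton_iff] at hw
      simp [hU, hw]
  have hUclosed : IsClosed U := by
    rw [hUeq]; exact isClosed_singleton.preimage hcont
  -- two points
  have hid_face : NFace n {(id : Fin n → Fin n)} := by
    refine ⟨id, ?_⟩
    intro f hf
    simp only [Finset.mem_singleton] at hf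
    subst hf
    exact fun i j hij h => hij h
  have hc0_face : NFace n {(fun _ => ⟨0, by omega⟩ : Fin n → Fin n)} := by
    refine ⟨fun _ => ⟨1, by omega⟩, ?_⟩
    intro f hf
    simp only [Finset.mem_singleton] at hf
    subst hf
    intro i j hij h
    exact absurd (congrArg Fin.val h) (by simp)
  have hmem : ∀ f : Fin n → Fin n, NFace n {f} →
      ((∀ v, 0 ≤ (fun g => if g = f then (1:ℝ) else 0) v) ∧
        (∑ᶠ v, (fun g => if g = f then (1:ℝ) else 0) v) = 1 ∧
        ∃ σ, NFace n σ ∧ ∀ v, (fun g => if g = f then (1:ℝ) else 0) v ≠ 0 → v ∈ σ) := by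
    intro f hf
    refine ⟨fun v => by positivity, ?_, {f}, hf, ?_⟩
    · rw [finsum_eq_single _ f (fun v hv => by simp [hv])]
      simp
    · intro v hv
      simp only [Finset.mem_singleton]
      by_contra hvf
      simp [hvf] at hv
  have hne01 : ((fun _ => ⟨0, by omega⟩ : Fin n → Fin n)) ≠ id := by
    intro h
    have := congrFun h ⟨1, by omega⟩
    exact absurd (congrArg Fin.val this) (by simp)
  set p : Realization (NFace n) := ⟨_, hmem id hid_face⟩ with hp
  set q : Realization (NFace n) := ⟨_, hmem _ hc0_face⟩ with hq
  have hpU : p ∈ U := by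
    show (if (id : Fin n → Fin n) = id then (1:ℝ) else 0) ≠ 0
    simp [hU, hp]
  have hqU : q ∉ U := by
    simp only [hU, hq, Set.mem_setOf_eq, ne_eq, not_not]
    show ¬ ¬ (if (id : Fin n → Fin n) = (fun _ => ⟨0, by omega⟩ : Fin n → Fin n) then (1:ℝ) else 0) = 0
    rw [not_not]
    simp only [ite_eq_right_iff, one_ne_zero, imp_false]
    exact fun h => hne01 h.symm
  haveI := hconn
  rcases isClopen_iff.1 ⟨hUclosed, hUopen⟩ with h | h
  · rw [h] at hpU; exact hpU
  · rw [h] at hqU; exact hqU (Set.mem_univ q)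
end

section
/- Let $\eta = \{\langle x_1 \rangle, \dots, \langle x_p \rangle, f_1, f_2\}$ be a simplex of $\mathcal{N}(G)$ contained in $N(w_1 \cdots w_n)$ where $w_k = 1$, $\{x_1,\dots,x_p\} = [m] \setminus \{w_1,\dots,w_n\}$, $f_2(i) = w_i$ for all $i \neq k$, and $w_{i_0} = \min\{w_j : j \neq k\}$. If $f_2(k) > w_{i_0}$, then $\eta \setminus \{f_1\}$ lies in $S_{w_{i_0}}$ of the matching (i.e., it is matched with $(\eta \setminus \{f_1\}) \cup \langle w_{i_0} \rangle$). -/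
/-- Vertices of the fold `G` of `K_m^{K_n}`: constant maps and injective maps. -/
def GVert (n m : ℕ) (f : Fin n → Fin m) : Prop :=
  (∃ x, ∀ i, f i = x) ∨ Function.Injective f

/-- The constant map `⟨k+1⟩` (colors `1,…,m` are represented by `0,…,m-1`). -/
def cst (n m : ℕ) [NeZero m] (k : ℕ) : Fin n → Fin m := fun _ => Fin.ofNat m k

/-- Nonempty faces of the neighborhood complex `𝒩(G)` of the fold `G`. -/
def NFaceG (n m : ℕ) (σ : Finset (Fin n → Fin m)) : Prop :=
  (∀ f ∈ σ, GVert n m f) ∧ ∃ h, GVert n m h ∧ ∀ f ∈ σ, ExpAdj n m f h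

/-- `Sp n m k` is the set `S'_{k}` of the paper (with `S'_0` the full face poset
of `𝒩(G)`): the faces still unmatched after matching with the constant maps
`⟨1⟩, …, ⟨k⟩`. -/
def Sp (n m : ℕ) [NeZero m] : ℕ → Set (Finset (Fin n → Fin m))
  | 0 => {σ | σ.Nonempty ∧ NFaceG n m σ}
  | k + 1 =>
      Sp n m k \
        ({σ | σ ∈ Sp n m k ∧ cst n m k ∉ σ ∧ insert (cst n m k) σ ∈ Sp n m k} ∪
          (insert (cst n m k)) ''
            {σ | σ ∈ Sp n m k ∧ cst n m k ∉ σ ∧ insert (cst n m k) σ ∈ Sp n m k})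

/-- `MSet n m k` is the set `S_{k+1}` of the paper: the faces matched (by adding
the constant map `⟨k+1⟩`) at stage `k+1`. -/
def MSet (n m : ℕ) [NeZero m] (k : ℕ) : Set (Finset (Fin n → Fin m)) :=
  {σ | σ ∈ Sp n m k ∧ cst n m k ∉ σ ∧ insert (cst n m k) σ ∈ Sp n m k}

/-- A face of `𝒩(G)` is critical when it is unmatched by the matching `μ`. -/
def Critical (n m : ℕ) [NeZero m] (σ : Finset (Fin n → Fin m)) : Prop :=
  σ ∈ Sp n m 0 ∧ ∀ k < m, σ ∉ MSet n m k ∧ ¬ ∃ τ ∈ MSet n m k, σ = insert (cst n m k) τ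


section Helpers

variable (n m : ℕ) [NeZero m]

lemma Sp_succ_eq (k : ℕ) :
    Sp n m (k + 1) = Sp n m k \ (MSet n m k ∪ (insert (cst n m k)) '' MSet n m k) := rfl

lemma Sp_succ_subset (k : ℕ) : Sp n m (k + 1) ⊆ Sp n m k := fun _ h => h.1

lemma Sp_mono : ∀ {j j' : ℕ}, j ≤ j' → Sp n m j' ⊆ Sp n m j := by
  intro j j' h
  induction j' with
  | zero => simp_all
  | succ l ih =>
    rcases Nat.eq_or_lt_of_le h with h1 | h1
    · subst h1; exact subset_rfl
    · exact (ih (Nat.lt_succ_iff.mp h1)).trans' (Sp_succ_subset n m l)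

lemma mem_Sp_zero {σ : Finset (Fin n → Fin m)} (hne : σ.Nonempty)
    (hv : ∀ f ∈ σ, GVert n m f) (h : Fin n → Fin m) (hG : GVert n m h)
    (hadj : ∀ f ∈ σ, ExpAdj n m f h) : σ ∈ Sp n m 0 :=
  ⟨hne, hv, h, hG, hadj⟩

lemma face_subset {τ τ' : Finset (Fin n → Fin m)} (hsub : τ ⊆ τ')
    (h : τ' ∈ Sp n m 0) (hne : τ.Nonempty) : τ ∈ Sp n m 0 := by
  obtain ⟨_, hv, g, hG, hadj⟩ := h
  exact ⟨hne, fun f hf => hv f (hsub hf), g, hG, fun f hf => hadj f (hsub hf)⟩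

lemma not_Sp_of_MSet0 {σ : Finset (Fin n → Fin m)} (h : σ ∈ MSet n m 0)
    {j : ℕ} (hj : 1 ≤ j) : σ ∉ Sp n m j := fun hs =>
  (Sp_mono n m hj hs).2 (Or.inl h)

lemma mem_Sp_succ {k : ℕ} {σ : Finset (Fin n → Fin m)} (hσ : σ ∈ Sp n m k)
    (h1 : σ ∉ MSet n m k)
    (h2 : ∀ τ ∈ MSet n m k, σ ≠ insert (cst n m k) τ) : σ ∈ Sp n m (k + 1) := by
  refine ⟨hσ, ?_⟩
  rintro (h | ⟨τ, hτ, rfl⟩)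
  · exact h1 h
  · exact h2 τ hτ rfl

end Helpers

/-- Let `η = {⟨x₁⟩,…,⟨x_p⟩, f₁, f₂}` be a simplex of `𝒩(G)` contained in
`N(w₁⋯wₙ)` with `w_k = 1`, `{x₁,…,x_p} = [m] \ {w₁,…,wₙ}`, `f₂(i) = w_i` for
`i ≠ k`, and `w_{i₀} = min {w_j : j ≠ k}`.  If `f₂(k) > w_{i₀}`, then
`η \ {f₁}` lies in `S_{w_{i₀}}`, i.e. it is matched with
`(η \ {f₁}) ∪ {⟨w_{i₀}⟩}`.  (Colors `1,…,m` are `0,…,m-1`.) -/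
theorem facet_in_S_w_i0 (n m : ℕ) [NeZero m] (hn : 3 ≤ n) (hnm : n < m)
    (w : Fin n → Fin m) (hw : Function.Injective w) (k : Fin n) (hk : w k = 0)
    (i₀ : Fin n) (hi₀k : i₀ ≠ k) (hmin : ∀ j : Fin n, j ≠ k → w i₀ ≤ w j)
    (f₁ f₂ : Fin n → Fin m)
    (hf₁ : Function.Injective f₁) (hf₂ : Function.Injective f₂) (hne : f₁ ≠ f₂)
    (hf₂w : ∀ i : Fin n, i ≠ k → f₂ i = w i)
    (η : Finset (Fin n → Fin m))
    (hη : η = ((Finset.univ \ Finset.univ.image w).image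
        (fun x : Fin m => (fun _ => x : Fin n → Fin m))) ∪ {f₁, f₂})
    (hηface : η ∈ Sp n m 0)
    (hηN : ∀ f ∈ η, ExpAdj n m f w)
    (hgt : w i₀ < f₂ k) :
    η.erase f₁ ∈ MSet n m ((w i₀ : Fin m) : ℕ) := by
  have hnt : Nontrivial (Fin n) := Fin.nontrivial_iff_two_le.mpr (by omega)
  set c : ℕ := ((w i₀ : Fin m) : ℕ) with hc
  set C : Finset (Fin n → Fin m) :=
    (Finset.univ \ Finset.univ.image w).image
      (fun x : Fin m => (fun _ => x : Fin n → Fin m)) with hC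
  -- basic facts
  have hwi₀0 : w i₀ ≠ 0 := fun h => hi₀k (hw (h.trans hk.symm))
  have hc0 : 0 < c := by
    refine Nat.pos_of_ne_zero fun h => hwi₀0 (Fin.ext ?_)
    simp [hc] at h ⊢
    exact h
  have hcm : c < m := (w i₀).isLt
  have hinj_ne_const : ∀ g : Fin n → Fin m, Function.Injective g →
      ∀ x : Fin m, g ≠ (fun _ => x) := by
    intro g hg x h
    exact hi₀k (hg (by rw [h]))
  have hf₂k0 : f₂ k ≠ 0 := by
    intro h; rw [h, Fin.lt_def, Fin.val_zero] at hgt; exact Nat.not_lt_zero _ hgt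
  have hf₂kw : ∀ j : Fin n, f₂ k ≠ w j := by
    intro j h
    by_cases hj : j = k
    · subst hj; rw [hk] at h; exact hf₂k0 h
    · exact hj (hf₂ (h.trans (hf₂w j hj).symm)).symm
  have hwi0_le_f2 : ∀ i : Fin n, w i₀ ≤ f₂ i := by
    intro i
    by_cases hi : i = k
    · subst hi; exact hgt.le
    · rw [hf₂w i hi]; exact hmin i hi
  have hf₂0 : ∀ i, f₂ i ≠ 0 := by
    intro i h
    by_cases hi : i = k
    · subst hi; exact hf₂k0 h
    · exact hi (hw ((hf₂w i hi).symm.trans (h.trans hk.symm)))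
  -- membership in C
  have memC : ∀ g : Fin n → Fin m,
      g ∈ C ↔ ∃ x : Fin m, (∀ i, w i ≠ x) ∧ g = (fun _ => x) := by
    intro g
    constructor
    · intro h
      obtain ⟨x, hx, rfl⟩ := Finset.mem_image.mp h
      refine ⟨x, ?_, rfl⟩
      intro i hi
      exact (Finset.mem_sdiff.mp hx).2 (Finset.mem_image.mpr ⟨i, Finset.mem_univ i, hi⟩)
    · rintro ⟨x, hx, rfl⟩
      refine Finset.mem_image.mpr ⟨x, ?_, rfl⟩
      refine Finset.mem_sdiff.mpr ⟨Finset.mem_univ x, ?_⟩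
      intro h
      obtain ⟨i, -, hi⟩ := Finset.mem_image.mp h
      exact hx i hi
  have hf₁C : f₁ ∉ C := by
    intro h; obtain ⟨x, -, hx⟩ := (memC f₁).mp h
    exact hinj_ne_const f₁ hf₁ x hx
  have hf₂C : f₂ ∉ C := by
    intro h; obtain ⟨x, -, hx⟩ := (memC f₂).mp h
    exact hinj_ne_const f₂ hf₂ x hx
  -- membership in σ := η.erase f₁
  have memσ : ∀ g : Fin n → Fin m, g ∈ η.erase f₁ ↔ (g ∈ C ∨ g = f₂) := by
    intro g
    rw [Finset.mem_erase, hη]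
    simp only [Finset.mem_union, Finset.mem_insert, Finset.mem_singleton, ← hC]
    constructor
    · rintro ⟨hg, (h | h | h)⟩
      · exact Or.inl h
      · exact absurd h hg
      · exact Or.inr h
    · rintro (h | rfl)
      · exact ⟨fun e => hf₁C (e ▸ h), Or.inl h⟩
      · exact ⟨hne.symm, Or.inr (Or.inr rfl)⟩
  have hf₂σ : f₂ ∈ η.erase f₁ := (memσ f₂).mpr (Or.inr rfl)
  have hCσ : C ⊆ η.erase f₁ := fun g hg => (memσ g).mpr (Or.inl hg)
  have hηG : ∀ f ∈ η, GVert n m f := hηface.2.1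
  -- σ is a face
  have face_σ : η.erase f₁ ∈ Sp n m 0 :=
    mem_Sp_zero n m ⟨f₂, hf₂σ⟩ (fun f hf => hηG f (Finset.mem_of_mem_erase hf))
      w (Or.inr hw) (fun f hf => hηN f (Finset.mem_of_mem_erase hf))
  -- extraction from adjacency with a constant
  have adj_const : ∀ (f : Fin n → Fin m) (d : Fin m),
      ExpAdj n m f (fun _ => d) → ∀ i, f i ≠ d := by
    intro f d hadj i
    obtain ⟨j, hj⟩ := exists_ne i
    exact hadj i j hj.symm
  -- any face containing C, f₂ and ⟨0⟩ is impossible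
  have key_nonface : ∀ τ : Finset (Fin n → Fin m), C ⊆ τ → f₂ ∈ τ →
      (fun _ => (0 : Fin m)) ∈ τ → τ ∉ Sp n m 0 := by
    intro τ hCτ hf2τ h0τ hτ
    obtain ⟨-, -, h, hhG, hadj⟩ := hτ
    have h0' : ∀ j, h j ≠ 0 := by
      intro j
      obtain ⟨i, hi⟩ := exists_ne j
      exact fun e => hadj _ h0τ i j hi e.symm
    have him : ∀ j, ∃ l, w l = h j := by
      intro j
      by_contra hcon
      push_neg at hcon
      have hmem : (fun _ => h j) ∈ τ := hCτ ((memC _).mpr ⟨h j, hcon, rfl⟩)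
      obtain ⟨i, hi⟩ := exists_ne j
      exact hadj _ hmem i j hi rfl
    rcases hhG with ⟨d, hd⟩ | hinj
    · obtain ⟨l, hl⟩ := him k
      rw [hd k] at hl
      have hlk : l ≠ k := by
        intro e; rw [e, hk] at hl; exact h0' k (hl.symm ▸ (hd k).symm ▸ rfl) |>.elim
      have hne2 : f₂ l ≠ d := by
        obtain ⟨j, hj⟩ := exists_ne l
        have := hadj _ hf2τ l j hj.symm
        rwa [hd j] at this
      exact hne2 (by rw [hf₂w l hlk, hl])
    · have hsub : Finset.univ.image h ⊆ (Finset.univ.image w).erase 0 := by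
        intro x hx
        obtain ⟨j, -, rfl⟩ := Finset.mem_image.mp hx
        refine Finset.mem_erase.mpr ⟨h0' j, ?_⟩
        obtain ⟨l, hl⟩ := him j
        exact Finset.mem_image.mpr ⟨l, Finset.mem_univ l, hl⟩
      have h1 : (Finset.univ.image h).card = n := by
        rw [Finset.card_image_of_injective _ hinj, Finset.card_univ, Fintype.card_fin]
      have h2 : ((Finset.univ.image w).erase 0).card = n - 1 := by
        rw [Finset.card_erase_of_mem
          (Finset.mem_image.mpr ⟨k, Finset.mem_univ k, hk⟩),
          Finset.card_image_of_injective _ hw, Finset.card_univ, Fintype.card_fin]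
      have := Finset.card_le_card hsub
      omega
  have hcast : ∀ j : ℕ, j < m → ((Fin.ofNat m j : Fin m) : ℕ) = j := fun j hj => by
    rw [Fin.val_ofNat]; exact Nat.mod_eq_of_lt hj
  have hcval : ((w i₀ : Fin m) : ℕ) = c := rfl
  have hcstc : cst n m c = (fun _ => w i₀) := by
    funext i; apply Fin.ext; show (Fin.ofNat m c : Fin m).val = (w i₀).val
    rw [Fin.val_ofNat, Nat.mod_eq_of_lt hcm]
  have hcst0 : cst n m 0 = (fun _ => (0 : Fin m)) := by
    funext i; apply Fin.ext; show (Fin.ofNat m 0 : Fin m).val = (0 : Fin m).val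
    rw [Fin.val_ofNat, Nat.zero_mod, Fin.val_zero]
  -- ⟨j⟩ ∈ σ for 0 < j < c
  have cstj_mem : ∀ j : ℕ, 0 < j → j < c → (fun _ => (Fin.ofNat m j)) ∈ η.erase f₁ := by
    intro j hj0 hjc
    refine hCσ ((memC _).mpr ⟨(Fin.ofNat m j), ?_, rfl⟩)
    intro i he
    by_cases hi : i = k
    · subst hi; rw [hk] at he
      have h2 := congrArg Fin.val he
      rw [Fin.val_zero, hcast j (hjc.trans hcm)] at h2
      omega
    · have h1 : c ≤ (w i).val := Fin.le_def.mp (hmin i hi)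
      have h2 : (w i).val = j := by rw [he, hcast j (hjc.trans hcm)]
      omega
  have cst0_not_σ : (fun _ => (0:Fin m)) ∉ η.erase f₁ := by
    intro h
    rcases (memσ _).mp h with h | h
    · obtain ⟨x, hx, he⟩ := (memC _).mp h
      exact hx k (hk.trans (congrFun he k))
    · exact hinj_ne_const f₂ hf₂ 0 h.symm
  have cstc_not_σ : (fun _ => w i₀) ∉ η.erase f₁ := by
    intro h
    rcases (memσ _).mp h with h | h
    · obtain ⟨x, hx, he⟩ := (memC _).mp h
      exact hx i₀ (congrFun he k)
    · exact hinj_ne_const f₂ hf₂ (w i₀) h.symm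
  have cst0_not_plus : (fun _ => (0:Fin m)) ∉ insert (fun _ => w i₀) (η.erase f₁) := by
    intro h
    rcases Finset.mem_insert.mp h with h | h
    · exact hwi₀0 (congrFun h k).symm
    · exact cst0_not_σ h
  -- insert ⟨w i₀⟩ σ is a face, with common neighbour ⟨0⟩
  have face_plus : insert (fun _ => w i₀) (η.erase f₁) ∈ Sp n m 0 := by
    refine mem_Sp_zero n m ⟨f₂, Finset.mem_insert_of_mem hf₂σ⟩ ?_ (fun _ => (0:Fin m))
      (Or.inl ⟨0, fun _ => rfl⟩) ?_
    · intro f hf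
      rcases Finset.mem_insert.mp hf with rfl | hf
      · exact Or.inl ⟨w i₀, fun _ => rfl⟩
      · exact hηG f (Finset.mem_of_mem_erase hf)
    · intro f hf i j hij
      rcases Finset.mem_insert.mp hf with rfl | hf
      · show w i₀ ≠ 0
        exact hwi₀0
      · rcases (memσ f).mp hf with hfC | rfl
        · obtain ⟨x, hx, rfl⟩ := (memC f).mp hfC
          show x ≠ 0
          exact fun e => hx k (hk.trans e.symm)
        · exact hf₂0 i
  -- insert ⟨0⟩ (σ \ ⟨j⟩) is a face, with common neighbour w[k ↦ j]
  have face_sig_j : ∀ j : ℕ, 0 < j → j < c →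
      insert (fun _ => (0:Fin m)) ((η.erase f₁).erase (fun _ => (Fin.ofNat m j)))
        ∈ Sp n m 0 := by
    intro j hj0 hjc
    have hjm : j < m := hjc.trans hcm
    have hjval : ((Fin.ofNat m j) : ℕ) = j := hcast j hjm
    set hW : Fin n → Fin m := fun l => if l = k then (Fin.ofNat m j) else w l with hWdef
    have hWk : hW k = (Fin.ofNat m j) := by simp [hWdef]
    have hWl : ∀ l, l ≠ k → hW l = w l := by intro l hl; simp [hWdef, hl]
    have hwj : ∀ l, w l ≠ (Fin.ofNat m j) := by
      intro l he
      by_cases hl : l = k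
      · subst hl; rw [hk] at he
        have h2 := congrArg Fin.val he
        rw [Fin.val_zero, hjval] at h2
        omega
      · have h1 : c ≤ (w l).val := Fin.le_def.mp (hmin l hl)
        have h2 := congrArg Fin.val he
        rw [hjval] at h2
        omega
    have hWinj : Function.Injective hW := by
      intro a b hab
      by_cases ha : a = k <;> by_cases hb : b = k
      · rw [ha, hb]
      · rw [hWl b hb, ha, hWk] at hab; exact absurd hab.symm (hwj b)
      · rw [hWl a ha, hb, hWk] at hab; exact absurd hab (hwj a)
      · rw [hWl a ha, hWl b hb] at hab; exact hw hab
    refine mem_Sp_zero n m ⟨(fun _ => (0:Fin m)), Finset.mem_insert_self _ _⟩ ?_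
      hW (Or.inr hWinj) ?_
    · intro f hf
      rcases Finset.mem_insert.mp hf with rfl | hf
      · exact Or.inl ⟨0, fun _ => rfl⟩
      · exact hηG f (Finset.mem_of_mem_erase (Finset.mem_of_mem_erase hf))
    · intro f hf i j' hij
      rcases Finset.mem_insert.mp hf with rfl | hf
      · show (0:Fin m) ≠ hW j'
        intro e
        by_cases hj' : j' = k
        · rw [hj', hWk] at e
          have h2 := congrArg Fin.val e
          rw [Fin.val_zero, hjval] at h2
          omega
        · rw [hWl j' hj'] at e
          exact hj' (hw (e.symm.trans hk.symm))
      · obtain ⟨hfne, hfσ⟩ := Finset.mem_erase.mp hf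
        rcases (memσ f).mp hfσ with hfC | hfeq
        · obtain ⟨x, hx, rfl⟩ := (memC f).mp hfC
          show x ≠ hW j'
          intro e
          by_cases hj' : j' = k
          · rw [hj', hWk] at e
            exact hfne (by funext l; exact e)
          · rw [hWl j' hj'] at e
            exact hx j' e.symm
        · rw [hfeq]
          show f₂ i ≠ hW j'
          intro e
          by_cases hj' : j' = k
          · rw [hj', hWk] at e
            have h1 : c ≤ (f₂ i).val := Fin.le_def.mp (hwi0_le_f2 i)
            have h2 := congrArg Fin.val e
            rw [hjval] at h2
            omega
          · rw [hWl j' hj'] at e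
            by_cases hi : i = k
            · subst hi; exact hf₂kw j' e
            · rw [hf₂w i hi] at e
              exact hij (hw e)
  -- insert ⟨0⟩ (σ⁺ \ ⟨j⟩) is a face, with common neighbour ⟨j⟩
  have face_plus_j : ∀ j : ℕ, 0 < j → j < c →
      insert (fun _ => (0:Fin m))
        ((insert (fun _ => w i₀) (η.erase f₁)).erase (fun _ => (Fin.ofNat m j)))
        ∈ Sp n m 0 := by
    intro j hj0 hjc
    have hjm : j < m := hjc.trans hcm
    have hjval : ((Fin.ofNat m j) : ℕ) = j := hcast j hjm
    refine mem_Sp_zero n m ⟨_, Finset.mem_insert_self _ _⟩ ?_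
      (fun _ => (Fin.ofNat m j)) (Or.inl ⟨_, fun _ => rfl⟩) ?_
    · intro f hf
      rcases Finset.mem_insert.mp hf with rfl | hf
      · exact Or.inl ⟨0, fun _ => rfl⟩
      · have hf2 := Finset.mem_of_mem_erase hf
        rcases Finset.mem_insert.mp hf2 with rfl | hf3
        · exact Or.inl ⟨w i₀, fun _ => rfl⟩
        · exact hηG f (Finset.mem_of_mem_erase hf3)
    · intro f hf i j' hij
      rcases Finset.mem_insert.mp hf with rfl | hf
      · show (0:Fin m) ≠ (Fin.ofNat m j)
        intro e
        have h2 := congrArg Fin.val e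
        rw [Fin.val_zero, hjval] at h2
        omega
      · obtain ⟨hfne, hf2⟩ := Finset.mem_erase.mp hf
        rcases Finset.mem_insert.mp hf2 with rfl | hf3
        · show w i₀ ≠ (Fin.ofNat m j)
          intro e
          have h2 := congrArg Fin.val e
          rw [hjval, hcval] at h2
          omega
        · rcases (memσ f).mp hf3 with hfC | hfeq
          · obtain ⟨x, hx, rfl⟩ := (memC f).mp hfC
            show x ≠ (Fin.ofNat m j)
            intro e
            exact hfne (by funext l; exact e)
          · rw [hfeq]
            show f₂ i ≠ (Fin.ofNat m j)
            intro e
            have h1 : c ≤ (f₂ i).val := Fin.le_def.mp (hwi0_le_f2 i)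
            have h2 := congrArg Fin.val e
            rw [hjval] at h2
            omega
  have M0_σ : ∀ j : ℕ, 0 < j → j < c →
      (η.erase f₁).erase (fun _ => (Fin.ofNat m j)) ∈ MSet n m 0 := by
    intro j hj0 hjc
    refine ⟨face_subset n m (Finset.erase_subset _ _) face_σ
        ⟨f₂, Finset.mem_erase.mpr ⟨hinj_ne_const f₂ hf₂ _, hf₂σ⟩⟩, ?_, ?_⟩
    · rw [hcst0]
      exact fun h => cst0_not_σ (Finset.mem_of_mem_erase h)
    · rw [hcst0]
      exact face_sig_j j hj0 hjc
  have M0_plus : ∀ j : ℕ, 0 < j → j < c →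
      (insert (fun _ => w i₀) (η.erase f₁)).erase (fun _ => (Fin.ofNat m j))
        ∈ MSet n m 0 := by
    intro j hj0 hjc
    refine ⟨face_subset n m (Finset.erase_subset _ _) face_plus
        ⟨f₂, Finset.mem_erase.mpr
          ⟨hinj_ne_const f₂ hf₂ _, Finset.mem_insert_of_mem hf₂σ⟩⟩, ?_, ?_⟩
    · rw [hcst0]
      exact fun h => cst0_not_plus (Finset.mem_of_mem_erase h)
    · rw [hcst0]
      exact face_plus_j j hj0 hjc
  -- the main induction on the stage
  have main : ∀ j : ℕ, j ≤ c → η.erase f₁ ∈ Sp n m j ∧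
      insert (fun _ => w i₀) (η.erase f₁) ∈ Sp n m j := by
    intro j hj
    induction j with
    | zero => exact ⟨face_σ, face_plus⟩
    | succ l ih =>
      obtain ⟨ih1, ih2⟩ := ih (Nat.le_of_succ_le hj)
      have hlc : l < c := hj
      rcases Nat.eq_zero_or_pos l with rfl | hl0
      · constructor
        · refine mem_Sp_succ n m ih1 ?_ ?_
          · intro hM
            have hF := hM.2.2
            rw [hcst0] at hF
            exact key_nonface _ (fun g hg => Finset.mem_insert_of_mem (hCσ hg))
              (Finset.mem_insert_of_mem hf₂σ) (Finset.mem_insert_self _ _) hF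
          · intro τ hτ heq
            have hm : cst n m 0 ∈ η.erase f₁ := heq ▸ Finset.mem_insert_self _ _
            rw [hcst0] at hm
            exact cst0_not_σ hm
        · refine mem_Sp_succ n m ih2 ?_ ?_
          · intro hM
            have hF := hM.2.2
            rw [hcst0] at hF
            refine key_nonface _ ?_ ?_ (Finset.mem_insert_self _ _) hF
            · exact fun g hg =>
                Finset.mem_insert_of_mem (Finset.mem_insert_of_mem (hCσ hg))
            · exact Finset.mem_insert_of_mem (Finset.mem_insert_of_mem hf₂σ)
          · intro τ hτ heq
            have hm : cst n m 0 ∈ insert (fun _ => w i₀) (η.erase f₁) :=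
              heq ▸ Finset.mem_insert_self _ _
            rw [hcst0] at hm
            exact cst0_not_plus hm
      · have hcl : cst n m l = (fun _ => (Fin.ofNat m l)) := rfl
        have hmem1 : cst n m l ∈ η.erase f₁ := by rw [hcl]; exact cstj_mem l hl0 hlc
        constructor
        · refine mem_Sp_succ n m ih1 (fun hM => hM.2.1 hmem1) ?_
          intro τ hτ heq
          have hτeq : τ = (η.erase f₁).erase (cst n m l) := by
            rw [heq, Finset.erase_insert hτ.2.1]
          have hτn : τ ∉ Sp n m l := by
            rw [hτeq, hcl]
            exact not_Sp_of_MSet0 n m (M0_σ l hl0 hlc) hl0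
          exact hτn hτ.1
        · have hmem2 : cst n m l ∈ insert (fun _ => w i₀) (η.erase f₁) :=
            Finset.mem_insert_of_mem hmem1
          refine mem_Sp_succ n m ih2 (fun hM => hM.2.1 hmem2) ?_
          intro τ hτ heq
          have hτeq : τ = (insert (fun _ => w i₀) (η.erase f₁)).erase (cst n m l) := by
            rw [heq, Finset.erase_insert hτ.2.1]
          have hτn : τ ∉ Sp n m l := by
            rw [hτeq, hcl]
            exact not_Sp_of_MSet0 n m (M0_plus l hl0 hlc) hl0
          exact hτn hτ.1
  obtain ⟨h1, h2⟩ := main c le_rfl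
  refine ⟨h1, ?_, ?_⟩
  · rw [hcstc]; exact cstc_not_σ
  · rw [hcstc]; exact h2
end
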